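/- Multidimensional Choquet capacitability theorem: For i ∈ {1,...,N}, let H^i ⊆ G^i be sets of functions from X^i to [−∞,∞], with H^i a lattice and G^i closed under suprema of increasing sequences and infima of arbitrary sequences; let H^i_δ be the set of infima of sequences in H^i. Let Φ : ∏_i G^i → ℝ be increasing in all entries, continuous along N-tuples of decreasing sequences in the H^i's and along N-tuples of increasing sequences in the G^i's. Extend Φ to arbitrary functions by Φ̂(Y^1,...,Y^N) := inf{Φ(X^1,...,X^N) : X^i ≥ Y^i, X^i ∈ G^i}. Then for any H^i-Suslin functions X^i, Φ̂(X^1,...,X^N) = sup{Φ(Y^1,...,Y^N) : Y^i ≤ X^i, Y^i ∈ H^i_δ}. -/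

import Mathlib

open Filter

noncomputable section

/-- A function is `H`-Suslin if it is obtained from functions in `H` via the Suslin
operation (supremum over branches of the infima along a Suslin scheme). -/
def SuslinFn {α : Type*} (H : Set (α → EReal)) (f : α → EReal) : Prop :=
  ∃ u : List ℕ → (α → EReal), (∀ l, u l ∈ H) ∧
    f = fun x => ⨆ σ : ℕ → ℕ, ⨅ n : ℕ, u (List.ofFn fun i : Fin n => σ (i : ℕ)) x

/-- The set of infima of sequences in `H`. -/
def deltaSet {α : Type*} (H : Set (α → EReal)) : Set (α → EReal) :=
  {g | ∃ f : ℕ → α → EReal, (∀ n, f n ∈ H) ∧ g = fun x => ⨅ n, f n x}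

namespace ChoquetAux




variable {α : Type*}

lemma mem_finInf (S : Set (α → EReal)) (h2 : ∀ f ∈ S, ∀ g ∈ S, (f ⊓ g) ∈ S) :
    ∀ (n : ℕ) (f : Fin (n + 1) → α → EReal), (∀ t, f t ∈ S) → (fun x => ⨅ t, f t x) ∈ S := by
  intro n
  induction n with
  | zero =>
    intro f hf
    have h : (fun x => ⨅ t : Fin 1, f t x) = f 0 := by
      funext x
      exact le_antisymm (iInf_le _ 0) (le_iInf fun t => by rw [Subsingleton.elim t 0])
    rw [h]; exact hf 0
  | succ n ih =>
    intro f hf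
    have h : (fun x => ⨅ t : Fin (n + 2), f t x)
        = (f 0 ⊓ fun x => ⨅ t : Fin (n + 1), f t.succ x) := by
      funext x
      simp only [Pi.inf_apply]
      apply le_antisymm
      · exact le_inf (iInf_le _ 0) (le_iInf fun t => iInf_le _ t.succ)
      · refine le_iInf fun t => ?_
        rcases Fin.eq_zero_or_eq_succ t with h | ⟨s, rfl⟩
        · rw [h]; exact inf_le_left
        · exact le_trans inf_le_right (iInf_le _ s)
    rw [h]
    exact h2 _ (hf 0) _ (ih _ fun t => hf t.succ)

lemma mem_finSup (S : Set (α → EReal)) (h2 : ∀ f ∈ S, ∀ g ∈ S, (f ⊔ g) ∈ S) :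
    ∀ (n : ℕ) (f : Fin (n + 1) → α → EReal), (∀ t, f t ∈ S) → (fun x => ⨆ t, f t x) ∈ S := by
  intro n
  induction n with
  | zero =>
    intro f hf
    have h : (fun x => ⨆ t : Fin 1, f t x) = f 0 := by
      funext x
      exact le_antisymm (iSup_le fun t => by rw [Subsingleton.elim t 0])
        (le_iSup (fun t : Fin 1 => f t x) 0)
    rw [h]; exact hf 0
  | succ n ih =>
    intro f hf
    have h : (fun x => ⨆ t : Fin (n + 2), f t x)
        = (f 0 ⊔ fun x => ⨆ t : Fin (n + 1), f t.succ x) := by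
      funext x
      simp only [Pi.sup_apply]
      apply le_antisymm
      · refine iSup_le fun t => ?_
        rcases Fin.eq_zero_or_eq_succ t with h | ⟨s, rfl⟩
        · rw [h]; exact le_sup_left
        · exact le_trans (le_iSup (fun t : Fin (n+1) => f t.succ x) s) le_sup_right
      · exact sup_le (le_iSup (fun t : Fin (n+2) => f t x) 0)
          (iSup_le fun t => le_iSup (fun t : Fin (n+2) => f t x) t.succ)
    rw [h]
    exact h2 _ (hf 0) _ (ih _ fun t => hf t.succ)

lemma mem_fintypeSup (S : Set (α → EReal)) (h2 : ∀ f ∈ S, ∀ g ∈ S, (f ⊔ g) ∈ S)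
    {ι : Type*} [Fintype ι] [Nonempty ι] (f : ι → α → EReal) (hf : ∀ t, f t ∈ S) :
    (fun x => ⨆ t, f t x) ∈ S := by
  obtain ⟨n, hn⟩ : ∃ n, Fintype.card ι = n + 1 :=
    ⟨Fintype.card ι - 1, (Nat.succ_pred_eq_of_pos Fintype.card_pos).symm⟩
  let e := Fintype.equivFinOfCardEq hn
  have h : (fun x => ⨆ t, f t x) = fun x => ⨆ s : Fin (n + 1), f (e.symm s) x := by
    funext x
    exact (Equiv.iSup_comp (g := fun t => f t x) e.symm).symm
  rw [h]
  exact mem_finSup S h2 n _ fun s => hf _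

/-- Lists from initial segments of a branch. -/
def Lk (σ : ℕ → ℕ) (n : ℕ) : List ℕ := List.ofFn fun t : Fin n => σ t

lemma Lk_length (σ : ℕ → ℕ) (n : ℕ) : (Lk σ n).length = n := List.length_ofFn

lemma Lk_take (σ : ℕ → ℕ) (n m : ℕ) : (Lk σ n).take m = Lk σ (min m n) := by
  apply List.ext_getElem
  · simp [Lk]
  · intro i h1 h2
    simp only [Lk, List.getElem_take, List.getElem_ofFn]

/-- Regularization of a Suslin scheme: infimum over all prefixes. -/
def vreg (u : List ℕ → α → EReal) (l : List ℕ) : α → EReal :=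
  fun x => ⨅ k : Fin (l.length + 1), u (l.take (k : ℕ)) x

lemma vreg_mem (S : Set (α → EReal)) (h2 : ∀ f ∈ S, ∀ g ∈ S, (f ⊓ g) ∈ S)
    (u : List ℕ → α → EReal) (hu : ∀ l, u l ∈ S) (l : List ℕ) : vreg u l ∈ S :=
  mem_finInf S h2 l.length (fun k => u (l.take (k : ℕ))) fun t => hu _

lemma vreg_le_take (u : List ℕ → α → EReal) (l : List ℕ) (m : ℕ) (x : α) :
    vreg u l x ≤ vreg u (l.take m) x := by
  refine le_iInf fun k => ?_
  have hk : (k : ℕ) ≤ (l.take m).length := Nat.lt_succ_iff.mp k.isLt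
  have hlen : (l.take m).length = min m l.length := List.length_take ..
  have h1 : (l.take m).take (k : ℕ) = l.take (min (k : ℕ) m) := List.take_take ..
  have hb : min (k : ℕ) m < l.length + 1 := by
    have hk' := hk.trans_eq hlen
    omega
  refine le_trans (iInf_le _ ⟨min (k : ℕ) m, hb⟩) (le_of_eq ?_)
  exact congrArg (fun l' => u l' x) h1.symm

lemma vreg_le_self (u : List ℕ → α → EReal) (l : List ℕ) (x : α) :
    vreg u l x ≤ u l x := by
  refine iInf_le_of_le ⟨l.length, Nat.lt_succ_self _⟩ ?_
  rw [List.take_length]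

lemma iInf_vreg_Lk (u : List ℕ → α → EReal) (σ : ℕ → ℕ) (x : α) :
    ⨅ n, vreg u (Lk σ n) x = ⨅ n, u (Lk σ n) x := by
  apply le_antisymm
  · refine le_iInf fun n => iInf_le_of_le n ?_
    exact vreg_le_self u (Lk σ n) x
  · refine le_iInf fun m => ?_
    refine le_iInf fun k => ?_
    have h1 : (Lk σ m).take (k : ℕ) = Lk σ (min (k : ℕ) m) := Lk_take ..
    rw [h1]
    exact iInf_le _ _


lemma koenig (μ : ℕ → ℕ) (g : List ℕ → EReal)
    (hg : ∀ l m, g l ≤ g (l.take m)) (t : EReal)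
    (hk : ∀ k : ℕ, ∃ j : (s : Fin k) → Fin (μ s + 1), t < g (List.ofFn fun s => (j s : ℕ))) :
    ∃ σ : ℕ → ℕ, ∀ n, t < g (Lk σ n) := by
  letI tA : ∀ n : ℕ, TopologicalSpace (Fin (μ n + 1)) := fun _ => ⊥
  haveI dA : ∀ n : ℕ, DiscreteTopology (Fin (μ n + 1)) := fun _ => ⟨rfl⟩
  set P := (n : ℕ) → Fin (μ n + 1) with hP
  set C : ℕ → Set P := fun k => {σ | t < g (List.ofFn fun s : Fin k => (σ s : ℕ))} with hC
  have hclosed : ∀ k, IsClosed (C k) := by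
    intro k
    have hcont : Continuous (fun (σ : P) (s : Fin k) => σ (s : ℕ)) :=
      continuous_pi fun s => continuous_apply _
    have hCk : C k = (fun (σ : P) (s : Fin k) => σ (s : ℕ)) ⁻¹'
        {j : (s : Fin k) → Fin (μ s + 1) | t < g (List.ofFn fun s => (j s : ℕ))} := rfl
    rw [hCk]
    exact (isClosed_discrete _).preimage hcont
  have hne : ∀ k, (C k).Nonempty := by
    intro k
    obtain ⟨j, hj⟩ := hk k
    refine ⟨fun n => if h : n < k then j ⟨n, h⟩ else ⟨0, Nat.succ_pos _⟩, ?_⟩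
    simp only [hC, Set.mem_setOf_eq]
    convert hj using 2
    exact congrArg _ (funext fun s => by simp [s.isLt])
  have hdec : ∀ k, C (k + 1) ⊆ C k := by
    intro k σ hσ
    have hσ' : t < g (List.ofFn fun s : Fin (k+1) => (σ (s : ℕ) : ℕ)) := hσ
    have hlist : (List.ofFn fun s : Fin (k+1) => (σ (s : ℕ) : ℕ)).take k
        = List.ofFn fun s : Fin k => (σ (s : ℕ) : ℕ) := by
      apply List.ext_getElem
      · simp only [List.length_take, List.length_ofFn]; omega
      · intro i h1 h2
        simp only [List.getElem_take, List.getElem_ofFn]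
    have h2 := hg (List.ofFn fun s : Fin (k+1) => (σ (s : ℕ) : ℕ)) k
    rw [hlist] at h2
    exact hσ'.trans_le h2
  obtain ⟨σ, hσ⟩ := IsCompact.nonempty_iInter_of_sequence_nonempty_isCompact_isClosed
    C hdec hne ((hclosed 0).isCompact) hclosed
  refine ⟨fun n => (σ n : ℕ), fun n => ?_⟩
  exact Set.mem_iInter.mp hσ n

variable {N : ℕ} {X : Fin N → Type*}

/-- Truncated Suslin function: supremum only over branches bounded by `μ` on `[0,k)`. -/
def Ttrunc (v : (i : Fin N) → List ℕ → X i → EReal) (μ : ℕ → ℕ) (k : ℕ) :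
    (i : Fin N) → X i → EReal :=
  fun i x => ⨆ σ : {σ : ℕ → ℕ // ∀ j, j < k → σ j ≤ μ j}, ⨅ n, v i (Lk σ.1 n) x

/-- The outer extension of `Φ`. -/
def Phat (G : (i : Fin N) → Set (X i → EReal)) (Φ : ((i : Fin N) → X i → EReal) → ℝ)
    (V : (i : Fin N) → X i → EReal) : ℝ :=
  ⨅ Z : {Z : (i : Fin N) → X i → EReal // ∀ i, Z i ∈ G i ∧ V i ≤ Z i}, Φ Z.1

lemma Ttrunc_zero (v : (i : Fin N) → List ℕ → X i → EReal) (μ : ℕ → ℕ) (i : Fin N) (x : X i) :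
    Ttrunc v μ 0 i x = ⨆ σ : ℕ → ℕ, ⨅ n, v i (Lk σ n) x := by
  apply le_antisymm
  · exact iSup_le fun σ => le_iSup (fun σ' : ℕ → ℕ => ⨅ n, v i (Lk σ' n) x) σ.1
  · exact iSup_le fun σ => le_iSup_of_le
      ⟨σ, fun j hj => absurd hj (Nat.not_lt_zero j)⟩ le_rfl

lemma Ttrunc_anti (v : (i : Fin N) → List ℕ → X i → EReal) (μ : ℕ → ℕ) {k k' : ℕ}
    (h : k ≤ k') (i : Fin N) (x : X i) : Ttrunc v μ k' i x ≤ Ttrunc v μ k i x :=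
  iSup_le fun σ => le_iSup_of_le ⟨σ.1, fun j hj => σ.2 j (lt_of_lt_of_le hj h)⟩ le_rfl

lemma Ttrunc_congr (v : (i : Fin N) → List ℕ → X i → EReal) {μ μ' : ℕ → ℕ} {k : ℕ}
    (h : ∀ j, j < k → μ j = μ' j) : Ttrunc v μ k = Ttrunc v μ' k := by
  funext i x
  apply le_antisymm
  · exact iSup_le fun σ => le_iSup_of_le ⟨σ.1, fun j hj => (h j hj) ▸ σ.2 j hj⟩ le_rfl
  · exact iSup_le fun σ => le_iSup_of_le ⟨σ.1, fun j hj => (h j hj).symm ▸ σ.2 j hj⟩ le_rfl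

lemma Ttrunc_update_mono (v : (i : Fin N) → List ℕ → X i → EReal) (μ : ℕ → ℕ) (k : ℕ)
    {m m' : ℕ} (h : m ≤ m') (i : Fin N) (x : X i) :
    Ttrunc v (Function.update μ k m) (k+1) i x ≤ Ttrunc v (Function.update μ k m') (k+1) i x := by
  refine iSup_le fun σ => le_iSup_of_le ⟨σ.1, fun j hj => le_trans (σ.2 j hj) ?_⟩ le_rfl
  rcases eq_or_ne j k with rfl | hne
  · simp only [Function.update_self]; exact h
  · simp only [Function.update_of_ne hne]; exact le_rfl

lemma Ttrunc_succ_sup (v : (i : Fin N) → List ℕ → X i → EReal) (μ : ℕ → ℕ) (k : ℕ)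
    (i : Fin N) (x : X i) :
    Ttrunc v μ k i x = ⨆ m : ℕ, Ttrunc v (Function.update μ k m) (k+1) i x := by
  apply le_antisymm
  · refine iSup_le fun σ => ?_
    refine le_trans ?_ (le_iSup
      (fun m => Ttrunc v (Function.update μ k m) (k+1) i x) (σ.1 k))
    refine le_iSup_of_le ⟨σ.1, ?_⟩ le_rfl
    intro j hj
    rcases Nat.lt_succ_iff_lt_or_eq.mp hj with h | rfl
    · rw [Function.update_of_ne (Nat.ne_of_lt h)]; exact σ.2 j h
    · rw [Function.update_self]
  · refine iSup_le fun m => iSup_le fun σ => ?_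
    refine le_iSup_of_le ⟨σ.1, fun j hj => ?_⟩ le_rfl
    have h := σ.2 j (Nat.lt_succ_of_lt hj)
    rwa [Function.update_of_ne (Nat.ne_of_lt hj)] at h

section Step

variable (G : (i : Fin N) → Set (X i → EReal))
variable (hGsup : ∀ i, ∀ f : ℕ → X i → EReal, (∀ n, f n ∈ G i) → Monotone f →
      (fun x => ⨆ n, f n x) ∈ G i)
variable (hGinf : ∀ i, ∀ f : ℕ → X i → EReal, (∀ n, f n ∈ G i) →
      (fun x => ⨅ n, f n x) ∈ G i)
variable (Φ : ((i : Fin N) → X i → EReal) → ℝ)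
variable (hmono : ∀ f g : (i : Fin N) → X i → EReal,
      (∀ i, f i ∈ G i) → (∀ i, g i ∈ G i) → (∀ i, f i ≤ g i) → Φ f ≤ Φ g)
variable (hinc : ∀ f : ℕ → (i : Fin N) → X i → EReal,
      (∀ n i, f n i ∈ G i) → (∀ i, Monotone fun n => f n i) →
      Tendsto (fun n => Φ (f n)) atTop (nhds (Φ (fun i x => ⨆ n, f n i x))))
variable (v : (i : Fin N) → List ℕ → X i → EReal)
variable (Zb : (i : Fin N) → X i → EReal) (hZbG : ∀ i, Zb i ∈ G i)
variable (hZb : ∀ μ k i x, Ttrunc v μ k i x ≤ Zb i x)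
variable (Wb : (i : Fin N) → X i → EReal) (hWbG : ∀ i, Wb i ∈ G i)
variable (hWb : ∀ μ k i x, Wb i x ≤ Ttrunc v μ k i x)

include hGsup hGinf hmono hinc hZbG hZb hWbG hWb in
lemma step_exists (μ : ℕ → ℕ) (k : ℕ) (δ : ℝ) (hδ : 0 < δ) :
    ∃ m, Phat G Φ (Ttrunc v μ k) - δ
      ≤ Phat G Φ (Ttrunc v (Function.update μ k m) (k+1)) := by
  by_contra hcon
  push_neg at hcon
  set c := Phat G Φ (Ttrunc v μ k) with hc
  have hEx : ∀ m : ℕ, ∃ Z : {Z : (i : Fin N) → X i → EReal //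
      ∀ i, Z i ∈ G i ∧ Ttrunc v (Function.update μ k m) (k+1) i ≤ Z i}, Φ Z.1 < c - δ := by
    intro m
    haveI : Nonempty {Z : (i : Fin N) → X i → EReal //
        ∀ i, Z i ∈ G i ∧ Ttrunc v (Function.update μ k m) (k+1) i ≤ Z i} :=
      ⟨⟨Zb, fun i => ⟨hZbG i, Pi.le_def.mpr fun x => hZb _ _ i x⟩⟩⟩
    have h := hcon m
    unfold Phat at h
    exact exists_lt_of_ciInf_lt h
  choose Zf hZf using hEx
  set A : ℕ → (i : Fin N) → X i → EReal := fun m i x => ⨅ l, (Zf (m + l)).1 i x with hA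
  have hAG : ∀ m i, A m i ∈ G i := fun m i =>
    hGinf i (fun l => (Zf (m + l)).1 i) (fun l => ((Zf (m + l)).2 i).1)
  have hAmono : ∀ i, Monotone fun m => A m i := by
    intro i a b hab
    refine Pi.le_def.mpr fun x => ?_
    refine le_iInf fun l => ?_
    refine iInf_le_of_le (b - a + l) (le_of_eq ?_)
    have h3 : a + (b - a + l) = b + l := by omega
    rw [h3]
  have hAgeV : ∀ m i x, Ttrunc v (Function.update μ k m) (k+1) i x ≤ A m i x := by
    intro m i x
    refine le_iInf fun l => ?_
    exact le_trans (Ttrunc_update_mono v μ k (Nat.le_add_right m l) i x)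
      (((Zf (m + l)).2 i).2 x)
  set S : (i : Fin N) → X i → EReal := fun i x => ⨆ m, A m i x with hS
  have hSG : ∀ i, S i ∈ G i := fun i => hGsup i (fun m => A m i) (fun m => hAG m i) (hAmono i)
  have hSgeT : ∀ i x, Ttrunc v μ k i x ≤ S i x := by
    intro i x
    rw [Ttrunc_succ_sup v μ k i x]
    exact iSup_le fun m => le_trans (hAgeV m i x) (le_iSup (fun m' => A m' i x) m)
  have hbdd : BddBelow (Set.range fun Z : {Z : (i : Fin N) → X i → EReal //
      ∀ i, Z i ∈ G i ∧ Ttrunc v μ k i ≤ Z i} => Φ Z.1) := by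
    refine ⟨Φ Wb, ?_⟩
    rintro r ⟨Z, rfl⟩
    exact hmono Wb Z.1 hWbG (fun i => (Z.2 i).1)
      (fun i => le_trans (Pi.le_def.mpr fun x => hWb μ k i x) (Z.2 i).2)
  have hcS : c ≤ Φ S := by
    rw [hc]
    unfold Phat
    exact ciInf_le hbdd ⟨S, fun i => ⟨hSG i, Pi.le_def.mpr fun x => hSgeT i x⟩⟩
  have htend := hinc A (fun m i => hAG m i) hAmono
  have h1 : ∀ m, Φ (A m) ≤ c - δ := by
    intro m
    refine le_trans (hmono (A m) (Zf m).1 (fun i => hAG m i) (fun i => ((Zf m).2 i).1)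
      (fun i => Pi.le_def.mpr fun x => ?_)) (le_of_lt (hZf m))
    refine iInf_le_of_le 0 (le_of_eq ?_)
    rw [Nat.add_zero]
  have hlim : Φ S ≤ c - δ := by
    have h2 := le_of_tendsto' htend h1
    rw [hS]
    exact h2
  linarith

include hGsup hGinf hmono hinc hZbG hZb hWbG hWb in
lemma exists_mu (ε : ℝ) (hε : 0 < ε) :
    ∃ μ : ℕ → ℕ, ∀ k, Phat G Φ (Ttrunc v μ k) - ε / 2 ^ (k+1)
      ≤ Phat G Φ (Ttrunc v μ (k+1)) := by
  have hstep : ∀ (μ : ℕ → ℕ) (k : ℕ), ∃ m, Phat G Φ (Ttrunc v μ k) - ε / 2 ^ (k+1)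
      ≤ Phat G Φ (Ttrunc v (Function.update μ k m) (k+1)) := fun μ k =>
    step_exists G hGsup hGinf Φ hmono hinc v Zb hZbG hZb Wb hWbG hWb μ k _ (by positivity)
  choose F hF using hstep
  let ν : ℕ → ℕ → ℕ := fun k => Nat.rec (motive := fun _ => ℕ → ℕ) (fun _ => 0)
    (fun k' prev => Function.update prev k' (F prev k')) k
  have hνs : ∀ k, ν (k+1) = Function.update (ν k) k (F (ν k) k) := fun k => rfl
  refine ⟨fun k => ν (k+1) k, fun k => ?_⟩
  have hagree : ∀ k j, j < k → ν k j = ν (j+1) j := by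
    intro k
    induction k with
    | zero => intro j hj; exact absurd hj (Nat.not_lt_zero j)
    | succ k ih =>
      intro j hj
      rcases Nat.lt_succ_iff_lt_or_eq.mp hj with h | rfl
      · rw [hνs k, Function.update_of_ne (by omega : j ≠ k)]
        exact ih j h
      · rfl
  have h1 : Ttrunc v (ν k) k = Ttrunc v (fun j => ν (j+1) j) k :=
    Ttrunc_congr v (fun j hj => hagree k j hj)
  have h2 : Ttrunc v (ν (k+1)) (k+1) = Ttrunc v (fun j => ν (j+1) j) (k+1) :=
    Ttrunc_congr v (fun j hj => hagree (k+1) j hj)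
  have h3 := hF (ν k) k
  rw [← hνs k] at h3
  rw [h1, h2] at h3
  exact h3

end Step

end ChoquetAux

open ChoquetAux

/-- Multidimensional Choquet capacitability theorem (functional form, after
Bartl–Cheridito–Kupper): for an increasing functional `Φ` that is continuous along
decreasing sequences in the lattices `H^i` and along increasing sequences in `G^i`,
the outer extension `Φ̂` of `Φ` is approximated from inside on `H^i`-Suslin functions by
elements of `H^i_δ`. -/
theorem multidimensional_choquet_capacitability
    {N : ℕ} {X : Fin N → Type*}
    (H G : (i : Fin N) → Set (X i → EReal))
    (hHG : ∀ i, H i ⊆ G i)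
    -- each H i is a lattice
    (hHlat : ∀ i, ∀ f ∈ H i, ∀ g ∈ H i, (f ⊔ g) ∈ H i ∧ (f ⊓ g) ∈ H i)
    -- G i is closed under suprema of increasing sequences
    (hGsup : ∀ i, ∀ f : ℕ → X i → EReal, (∀ n, f n ∈ G i) → Monotone f →
      (fun x => ⨆ n, f n x) ∈ G i)
    -- G i is closed under infima of arbitrary sequences
    (hGinf : ∀ i, ∀ f : ℕ → X i → EReal, (∀ n, f n ∈ G i) →
      (fun x => ⨅ n, f n x) ∈ G i)
    (Φ : ((i : Fin N) → X i → EReal) → ℝ)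
    -- Φ is increasing in all entries (on tuples from the G i)
    (hmono : ∀ f g : (i : Fin N) → X i → EReal,
      (∀ i, f i ∈ G i) → (∀ i, g i ∈ G i) → (∀ i, f i ≤ g i) → Φ f ≤ Φ g)
    -- continuity along N-tuples of decreasing sequences in the H i
    (hdec : ∀ f : ℕ → (i : Fin N) → X i → EReal,
      (∀ n i, f n i ∈ H i) → (∀ i, Antitone fun n => f n i) →
      Tendsto (fun n => Φ (f n)) atTop (nhds (Φ (fun i x => ⨅ n, f n i x))))
    -- continuity along N-tuples of increasing sequences in the G i
    (hinc : ∀ f : ℕ → (i : Fin N) → X i → EReal,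
      (∀ n i, f n i ∈ G i) → (∀ i, Monotone fun n => f n i) →
      Tendsto (fun n => Φ (f n)) atTop (nhds (Φ (fun i x => ⨆ n, f n i x))))
    -- the H i-Suslin functions
    (Y : (i : Fin N) → X i → EReal) (hY : ∀ i, SuslinFn (H i) (Y i)) :
    (⨅ Z : {Z : (i : Fin N) → X i → EReal // ∀ i, Z i ∈ G i ∧ Y i ≤ Z i}, Φ Z.1) =
      ⨆ W : {W : (i : Fin N) → X i → EReal // ∀ i, W i ∈ deltaSet (H i) ∧ W i ≤ Y i}, Φ W.1 := by
  classical
  have hY' : ∀ i, ∃ u : List ℕ → X i → EReal, (∀ l, u l ∈ H i) ∧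
      Y i = fun x => ⨆ σ : ℕ → ℕ, ⨅ n : ℕ, u (List.ofFn fun t : Fin n => σ (t : ℕ)) x := hY
  choose u hu hrep using hY'
  let v : (i : Fin N) → List ℕ → X i → EReal := fun i => vreg (u i)
  have hvH : ∀ i l, v i l ∈ H i := fun i l =>
    vreg_mem (H i) (fun f hf g hg => (hHlat i f hf g hg).2) (u i) (hu i) l
  have hYrep : ∀ i x, Y i x = ⨆ σ : ℕ → ℕ, ⨅ n, v i (Lk σ n) x := by
    intro i x
    have h0 : Y i x = ⨆ σ : ℕ → ℕ, ⨅ n, u i (Lk σ n) x := congrFun (hrep i) x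
    rw [h0]
    exact (iSup_congr fun σ => iInf_vreg_Lk (u i) σ x).symm
  have hT0 : ∀ μ : ℕ → ℕ, Ttrunc v μ 0 = Y := by
    intro μ; funext i x
    rw [Ttrunc_zero, ← hYrep i x]
  let W0 : (i : Fin N) → X i → EReal := fun i x => ⨅ n, v i (Lk (fun _ => 0) n) x
  have hW0δ : ∀ i, W0 i ∈ deltaSet (H i) := fun i =>
    ⟨fun n => v i (Lk (fun _ => 0) n), fun n => hvH i _, rfl⟩
  have hdG : ∀ i, ∀ f ∈ deltaSet (H i), f ∈ G i := by
    rintro i f ⟨g, hg, rfl⟩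
    exact hGinf i g fun n => hHG i (hg n)
  have hW0G : ∀ i, W0 i ∈ G i := fun i => hdG i _ (hW0δ i)
  have hW0T : ∀ (μ : ℕ → ℕ) (k : ℕ) i x, W0 i x ≤ Ttrunc v μ k i x := fun μ k i x =>
    le_iSup_of_le ⟨fun _ => 0, fun j _ => Nat.zero_le _⟩ le_rfl
  have hW0Y : ∀ i x, W0 i x ≤ Y i x := by
    intro i x
    rw [hYrep i x]
    exact le_iSup_of_le (fun _ => 0) le_rfl
  let Z0 : (i : Fin N) → X i → EReal := fun i => u i []
  have hZ0G : ∀ i, Z0 i ∈ G i := fun i => hHG i (hu i [])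
  have hYZ0 : ∀ i x, Y i x ≤ Z0 i x := by
    intro i x
    rw [hYrep i x]
    refine iSup_le fun σ => le_trans (iInf_le _ 0) ?_
    have h1 : Lk σ 0 = ([] : List ℕ) := by simp [Lk]
    calc v i (Lk σ 0) x ≤ u i (Lk σ 0) x := vreg_le_self (u i) _ x
      _ = u i [] x := by rw [h1]
  have hTZ0 : ∀ (μ : ℕ → ℕ) (k : ℕ) i x, Ttrunc v μ k i x ≤ Z0 i x := by
    intro μ k i x
    refine le_trans (Ttrunc_anti v μ (Nat.zero_le k) i x) ?_
    rw [hT0 μ]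
    exact hYZ0 i x
  haveI hZne : Nonempty {Z : (i : Fin N) → X i → EReal // ∀ i, Z i ∈ G i ∧ Y i ≤ Z i} :=
    ⟨⟨Z0, fun i => ⟨hZ0G i, Pi.le_def.mpr (hYZ0 i)⟩⟩⟩
  haveI hWne : Nonempty {W : (i : Fin N) → X i → EReal //
      ∀ i, W i ∈ deltaSet (H i) ∧ W i ≤ Y i} :=
    ⟨⟨W0, fun i => ⟨hW0δ i, Pi.le_def.mpr (hW0Y i)⟩⟩⟩
  have hbddW : BddAbove (Set.range fun W : {W : (i : Fin N) → X i → EReal //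
      ∀ i, W i ∈ deltaSet (H i) ∧ W i ≤ Y i} => Φ W.1) := by
    refine ⟨Φ Z0, ?_⟩
    rintro r ⟨W, rfl⟩
    exact hmono W.1 Z0 (fun i => hdG i _ (W.2 i).1) hZ0G
      (fun i => le_trans (W.2 i).2 (Pi.le_def.mpr (hYZ0 i)))
  have easy : (⨆ W : {W : (i : Fin N) → X i → EReal //
        ∀ i, W i ∈ deltaSet (H i) ∧ W i ≤ Y i}, Φ W.1)
      ≤ ⨅ Z : {Z : (i : Fin N) → X i → EReal // ∀ i, Z i ∈ G i ∧ Y i ≤ Z i}, Φ Z.1 :=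
    le_ciInf fun Z => ciSup_le fun W => hmono W.1 Z.1 (fun i => hdG i _ (W.2 i).1)
      (fun i => (Z.2 i).1) (fun i => le_trans (W.2 i).2 (Z.2 i).2)
  refine le_antisymm (le_of_forall_pos_le_add fun ε hε => ?_) easy
  obtain ⟨μ, hμ⟩ := exists_mu G hGsup hGinf Φ hmono hinc v Z0 hZ0G hTZ0 W0 hW0G hW0T ε hε
  have hind : ∀ k, Phat G Φ Y - ε + ε / 2 ^ k ≤ Phat G Φ (Ttrunc v μ k) := by
    intro k
    induction k with
    | zero =>
      rw [hT0 μ]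
      have h0 : ε / 2 ^ (0:ℕ) = ε := by norm_num
      linarith
    | succ k ih =>
      have h1 := hμ k
      have h2k : (0:ℝ) < 2 ^ k := by positivity
      have h2 : ε / 2 ^ k - ε / 2 ^ (k+1) = ε / 2 ^ (k+1) := by
        field_simp
        ring
      linarith
  let Bk : ℕ → (i : Fin N) → X i → EReal := fun k i x =>
    ⨆ j : ((s : Fin k) → Fin (μ s + 1)), v i (List.ofFn fun s => (j s : ℕ)) x
  have hBkH : ∀ (k : ℕ) i, Bk k i ∈ H i := fun k i =>
    mem_fintypeSup (H i) (fun f hf g hg => (hHlat i f hf g hg).1) _ fun j => hvH i _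
  have hBkge : ∀ (k : ℕ) i x, Ttrunc v μ k i x ≤ Bk k i x := by
    intro k i x
    refine iSup_le fun σ => le_trans (iInf_le _ k) ?_
    exact le_iSup_of_le
      (fun s => (⟨σ.1 s, Nat.lt_succ_of_le (σ.2 s s.isLt)⟩ : Fin (μ s + 1))) le_rfl
  let B' : ℕ → (i : Fin N) → X i → EReal := fun k i x => ⨅ j : Fin (k+1), Bk j i x
  have hB'H : ∀ (k : ℕ) i, B' k i ∈ H i := fun k i =>
    mem_finInf (H i) (fun f hf g hg => (hHlat i f hf g hg).2) k (fun j => Bk j i)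
      (fun j => hBkH j i)
  have hB'anti : ∀ i, Antitone fun k => B' k i := by
    intro i a b hab
    refine Pi.le_def.mpr fun x => ?_
    refine le_iInf fun j => ?_
    exact iInf_le (fun j' : Fin (b+1) => Bk j' i x) ⟨j, by omega⟩
  have hB'geT : ∀ (k : ℕ) i x, Ttrunc v μ k i x ≤ B' k i x := by
    intro k i x
    refine le_iInf fun j => ?_
    exact le_trans (Ttrunc_anti v μ (by omega : (j:ℕ) ≤ k) i x) (hBkge j i x)
  have hPhB' : ∀ k, Phat G Φ (Ttrunc v μ k) ≤ Φ (B' k) := by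
    intro k
    unfold Phat
    have hbb : BddBelow (Set.range fun Z : {Z : (i : Fin N) → X i → EReal //
        ∀ i, Z i ∈ G i ∧ Ttrunc v μ k i ≤ Z i} => Φ Z.1) := by
      refine ⟨Φ W0, ?_⟩
      rintro r ⟨Z, rfl⟩
      exact hmono W0 Z.1 hW0G (fun i => (Z.2 i).1)
        (fun i => le_trans (Pi.le_def.mpr fun x => hW0T μ k i x) (Z.2 i).2)
    exact ciInf_le hbb
      ⟨B' k, fun i => ⟨hHG i (hB'H k i), Pi.le_def.mpr fun x => hB'geT k i x⟩⟩
  let Wfin : (i : Fin N) → X i → EReal := fun i x => ⨅ k, B' k i x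
  have htd := hdec B' (fun k i => hB'H k i) hB'anti
  have hWfinlb : Phat G Φ Y - ε ≤ Φ Wfin := by
    have h1 : ∀ k, Phat G Φ Y - ε ≤ Φ (B' k) := by
      intro k
      have h2 : (0:ℝ) ≤ ε / 2 ^ k := by positivity
      have h3 := hind k
      have h4 := hPhB' k
      linarith
    exact ge_of_tendsto' htd h1
  have hWfinδ : ∀ i, Wfin i ∈ deltaSet (H i) := fun i =>
    ⟨fun k => B' k i, fun k => hB'H k i, rfl⟩
  have hWfinY : ∀ i x, Wfin i x ≤ Y i x := by
    intro i x
    by_contra hlt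
    push_neg at hlt
    obtain ⟨t, ht1, ht2⟩ := exists_between hlt
    have hk : ∀ k : ℕ, ∃ j : (s : Fin k) → Fin (μ s + 1),
        t < v i (List.ofFn fun s => (j s : ℕ)) x := by
      intro k
      have hWB : Wfin i x ≤ ⨆ j : ((s : Fin k) → Fin (μ s + 1)),
          v i (List.ofFn fun s => (j s : ℕ)) x := by
        refine le_trans (iInf_le (fun k' => B' k' i x) k) ?_
        exact iInf_le (fun j : Fin (k+1) => Bk j i x) ⟨k, Nat.lt_succ_self k⟩
      have h1 : t < ⨆ j : ((s : Fin k) → Fin (μ s + 1)),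
          v i (List.ofFn fun s => (j s : ℕ)) x := lt_of_lt_of_le ht2 hWB
      exact lt_iSup_iff.mp h1
    obtain ⟨σ, hσ⟩ := koenig μ (fun l => v i l x)
      (fun l m => vreg_le_take (u i) l m x) t hk
    have hty : t ≤ Y i x := by
      rw [hYrep i x]
      refine le_trans (le_iInf fun n => (hσ n).le) ?_
      exact le_iSup_of_le σ le_rfl
    exact absurd (lt_of_le_of_lt hty ht1) (lt_irrefl t)
  have hfinal : Φ Wfin ≤ ⨆ W : {W : (i : Fin N) → X i → EReal //
      ∀ i, W i ∈ deltaSet (H i) ∧ W i ≤ Y i}, Φ W.1 :=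
    le_ciSup hbddW ⟨Wfin, fun i => ⟨hWfinδ i, Pi.le_def.mpr fun x => hWfinY i x⟩⟩
  have hA : Phat G Φ Y = ⨅ Z : {Z : (i : Fin N) → X i → EReal //
      ∀ i, Z i ∈ G i ∧ Y i ≤ Z i}, Φ Z.1 := rfl
  rw [← hA]
  linarith
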